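/- Let E = {(η_i, ρ_i)}_{i=1}^n be a multipartite quantum state ensemble and fix x. If η_x ρ_x − η_i ρ_i is block positive for all i = 1,…,n, then for every separable measurement {M_i}_{i=1}^n (each M_i separable, Σ_i M_i = 1) the success probability Σ_i η_i Tr(ρ_i M_i) is at most η_x; hence p_SEP(E) = η_x. -/

import Mathlib

open Matrix BigOperators ComplexOrder

noncomputable section

/-- Tensor product of a family of local operators, one per party/step. -/
def tensorFam {m : ℕ} {ι : Fin m → Type*} [∀ k, Fintype (ι k)]
    (A : (k : Fin m) → Matrix (ι k) (ι k) ℂ) :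
    Matrix ((k : Fin m) → ι k) ((k : Fin m) → ι k) ℂ :=
  Matrix.of fun i j => ∏ k, A k (i k) (j k)

/-- Separable operator: a sum of tensor products of positive semidefinite local operators. -/
def IsSep {m : ℕ} {ι : Fin m → Type*} [∀ k, Fintype (ι k)]
    (E : Matrix ((k : Fin m) → ι k) ((k : Fin m) → ι k) ℂ) : Prop :=
  ∃ (S : Finset ℕ) (A : ℕ → (k : Fin m) → Matrix (ι k) (ι k) ℂ),
    (∀ s ∈ S, ∀ k, (A s k).PosSemidef) ∧ E = ∑ s ∈ S, tensorFam (A s)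

/-- Separable state: separable with trace one. -/
def IsSepState {m : ℕ} {ι : Fin m → Type*} [∀ k, Fintype (ι k)]
    (σ : Matrix ((k : Fin m) → ι k) ((k : Fin m) → ι k) ℂ) : Prop :=
  IsSep σ ∧ σ.trace = 1

/-- Block positive: nonnegative mean value on every separable state. -/
def IsBlockPos {m : ℕ} {ι : Fin m → Type*} [∀ k, Fintype (ι k)]
    (E : Matrix ((k : Fin m) → ι k) ((k : Fin m) → ι k) ℂ) : Prop :=
  ∀ σ, IsSepState σ → 0 ≤ ((E * σ).trace).re

def IsPOVM {α N : Type*} [Fintype α] [Fintype N] [DecidableEq N]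
    (M : α → Matrix N N ℂ) : Prop :=
  (∀ i, (M i).PosSemidef) ∧ ∑ i, M i = 1

/-- Average success probability of a guessing strategy. -/
def succProb {α N : Type*} [Fintype α] [Fintype N]
    (η : α → ℝ) (ρ M : α → Matrix N N ℂ) : ℝ :=
  ∑ i, η i * ((ρ i * M i).trace).re

/-- A PSD matrix with zero trace is zero. -/
lemma psd_eq_zero_of_trace_eq_zero {N : Type*} [Fintype N] [DecidableEq N]
    {M : Matrix N N ℂ} (h : M.PosSemidef) (ht : M.trace = 0) : M = 0 := by
  obtain ⟨B, rfl⟩ : ∃ B : Matrix N N ℂ, M = Bᴴ * B := by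
    open scoped MatrixOrder in
    exact ⟨CFC.sqrt M, by
      rw [← Matrix.star_eq_conjTranspose, (CFC.sqrt_nonneg M).isSelfAdjoint.star_eq,
        CFC.sqrt_mul_sqrt_self M (Matrix.nonneg_iff_posSemidef.mpr h)]⟩
  suffices hB : B = 0 by simp [hB]
  have h1 : ∑ j, ∑ i, Complex.normSq (B i j) = 0 := by
    have h2 := congrArg Complex.re ht
    simp only [Matrix.trace, Matrix.diag, Matrix.mul_apply, Matrix.conjTranspose_apply,
      Complex.re_sum, Complex.zero_re] at h2
    rw [← h2]
    refine Finset.sum_congr rfl fun j _ => Finset.sum_congr rfl fun i _ => ?_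
    simp [mul_comm, Complex.mul_conj]
  ext i j
  have h3 : ∀ j ∈ Finset.univ, (0:ℝ) ≤ ∑ i, Complex.normSq (B i j) :=
    fun j _ => Finset.sum_nonneg fun i _ => Complex.normSq_nonneg _
  have h4 := (Finset.sum_eq_zero_iff_of_nonneg h3).mp h1 j (Finset.mem_univ j)
  have h5 := (Finset.sum_eq_zero_iff_of_nonneg
    (fun i _ => Complex.normSq_nonneg (B i j))).mp h4 i (Finset.mem_univ i)
  simpa using Complex.normSq_eq_zero.mp h5

/-- real-scalar multiple of a PSD matrix is PSD -/
lemma psd_smul_real {N : Type*} [Fintype N] {M : Matrix N N ℂ} (h : M.PosSemidef)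
    {c : ℝ} (hc : 0 ≤ c) : ((c:ℂ) • M).PosSemidef := by
  rw [Matrix.posSemidef_iff_dotProduct_mulVec] at h ⊢
  constructor
  · unfold Matrix.IsHermitian
    rw [Matrix.conjTranspose_smul, h.1.eq]
    simp
  · intro x
    have h2 := h.2 x
    rw [Matrix.smul_mulVec, dotProduct_smul]
    exact mul_nonneg (Complex.zero_le_real.mpr hc) h2

lemma tensorFam_trace {m : ℕ} {ι : Fin m → Type*} [∀ k, Fintype (ι k)]
    (A : (k : Fin m) → Matrix (ι k) (ι k) ℂ) :
    (tensorFam A).trace = ∏ k, (A k).trace := by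
  have : ∏ k, (A k).trace = ∏ k, ∑ j, A k j j := rfl
  rw [this, Finset.prod_univ_sum, Fintype.piFinset_univ]
  rfl

lemma isSep_smul_tensor {m : ℕ} {ι : Fin m → Type*} [∀ k, Fintype (ι k)]
    (hm : 0 < m) (A : (k : Fin m) → Matrix (ι k) (ι k) ℂ)
    (hA : ∀ k, (A k).PosSemidef) {c : ℝ} (hc : 0 ≤ c) :
    IsSep ((c:ℂ) • tensorFam A) := by
  set k0 : Fin m := ⟨0, hm⟩
  refine ⟨{0}, fun _ k => if k = k0 then (c:ℂ) • A k else A k, ?_, ?_⟩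
  · intro s _ k
    by_cases hk : k = k0
    · subst hk
      simpa using psd_smul_real (hA k0) hc
    · simpa [hk] using hA k
  · rw [Finset.sum_singleton]
    ext i j
    simp only [tensorFam, Matrix.of_apply, Matrix.smul_apply, smul_eq_mul]
    have : ∀ k : Fin m, (if k = k0 then (c:ℂ) • A k else A k) (i k) (j k)
        = (if k = k0 then (c:ℂ) else 1) * A k (i k) (j k) := by
      intro k
      by_cases hk : k = k0 <;> simp [hk]
    rw [Finset.prod_congr rfl (fun k _ => this k), Finset.prod_mul_distrib]
    simp

lemma blockpos_sep_nonneg {m : ℕ} {ι : Fin m → Type*} [∀ k, Fintype (ι k)] [∀ k, DecidableEq (ι k)]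
    {H E : Matrix ((k : Fin m) → ι k) ((k : Fin m) → ι k) ℂ}
    (hH : IsBlockPos H) (hE : IsSep E) : 0 ≤ ((H * E).trace).re := by
  obtain ⟨S, A, hA, rfl⟩ := hE
  rw [Finset.mul_sum, Matrix.trace_sum, Complex.re_sum]
  refine Finset.sum_nonneg fun s hs => ?_
  have hPSD : ∀ k, (A s k).PosSemidef := hA s hs
  -- trace of each local factor is a nonneg real
  have htr : ∀ k, (A s k).trace = (((A s k).trace.re : ℝ) : ℂ) ∧ 0 ≤ ((A s k).trace).re := by
    intro k
    have h1 : 0 ≤ (A s k).trace := by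
      refine Finset.sum_nonneg fun i _ => ?_
      simpa [Matrix.mulVec, dotProduct, Pi.single_apply] using (hPSD k).dotProduct_mulVec_nonneg (Pi.single i 1)
    rw [Complex.le_def] at h1
    constructor
    · apply Complex.ext <;> simp [h1.2.symm]
    · simpa using h1.1
  set r : ℝ := ∏ k, ((A s k).trace).re with hr
  have hr0 : 0 ≤ r := Finset.prod_nonneg fun k _ => (htr k).2
  have hXtr : (tensorFam (A s)).trace = (r : ℂ) := by
    rw [tensorFam_trace, hr]
    push_cast
    exact Finset.prod_congr rfl fun k _ => (htr k).1
  rcases eq_or_lt_of_le hr0 with hrz | hrpos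
  · -- r = 0 : some local factor has zero trace, hence is zero, hence tensorFam = 0
    obtain ⟨k, _, hk⟩ := Finset.prod_eq_zero_iff.mp hrz.symm
    have hk0 : (A s k).trace = 0 := by rw [(htr k).1, hk]; simp
    have hAk : A s k = 0 := psd_eq_zero_of_trace_eq_zero (hPSD k) hk0
    have : tensorFam (A s) = 0 := by
      ext i j
      simp only [tensorFam, Matrix.of_apply, Matrix.zero_apply]
      exact Finset.prod_eq_zero (Finset.mem_univ k) (by simp [hAk])
    simp [this]
  · -- r > 0 : normalize to a separable state
    set σ := ((r⁻¹ : ℝ) : ℂ) • tensorFam (A s) with hσ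
    have hstate : IsSepState σ := by
      constructor
      · rcases Nat.eq_zero_or_pos m with hm | hm
        · -- m = 0 : r = 1 so σ = tensorFam (A s)
          subst hm
          have hre : r = 1 := by rw [hr]; simp
          rw [hσ, hre]
          simp only [inv_one, Complex.ofReal_one, one_smul]
          exact ⟨{s}, A, fun s' _ k => k.elim0, by simp⟩
        · exact isSep_smul_tensor hm (A s) hPSD (inv_nonneg.mpr hr0)
      · rw [hσ, Matrix.trace_smul, hXtr]
        simp only [smul_eq_mul]
        rw [← Complex.ofReal_mul, inv_mul_cancel₀ (ne_of_gt hrpos)]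
        simp
    have h6 := hH σ hstate
    rw [hσ, Matrix.mul_smul, Matrix.trace_smul] at h6
    have h6' : 0 ≤ r⁻¹ * ((H * tensorFam (A s)).trace).re := by
      simpa using h6
    have h7 := mul_nonneg hrpos.le h6'
    rwa [← mul_assoc, mul_inv_cancel₀ (ne_of_gt hrpos), one_mul] at h7

lemma tensorFam_one {m : ℕ} {ι : Fin m → Type*} [∀ k, Fintype (ι k)] [∀ k, DecidableEq (ι k)] :
    tensorFam (fun k => (1 : Matrix (ι k) (ι k) ℂ)) = 1 := by
  ext i j
  simp only [tensorFam, Matrix.of_apply]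
  by_cases h : i = j
  · subst h; simp [Matrix.one_apply]
  · rw [Matrix.one_apply_ne h]
    obtain ⟨k, hk⟩ : ∃ k, i k ≠ j k := by
      by_contra hc; push_neg at hc; exact h (funext hc)
    exact Finset.prod_eq_zero (Finset.mem_univ k) (by simp [Matrix.one_apply, hk])

/-- if η_x ρ_x − η_i ρ_i is block positive for all i, then every separable
measurement has success probability at most η_x, and hence p_SEP(E) = η_x
(η_x is the least upper bound of success probabilities over separable POVMs). -/
theorem psep_eq_of_blockpos {m : ℕ} {ι : Fin m → Type*}
    [∀ k, Fintype (ι k)] [∀ k, DecidableEq (ι k)] {n : ℕ}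
    (η : Fin n → ℝ) (ρ : Fin n → Matrix ((k : Fin m) → ι k) ((k : Fin m) → ι k) ℂ)
    (hη : ∀ i, 0 < η i) (hsum : ∑ i, η i = 1)
    (hρ : ∀ i, (ρ i).PosSemidef ∧ (ρ i).trace = 1)
    (x : Fin n)
    (hbp : ∀ i, IsBlockPos ((η x : ℂ) • ρ x - (η i : ℂ) • ρ i)) :
    (∀ M : Fin n → Matrix ((k : Fin m) → ι k) ((k : Fin m) → ι k) ℂ,
      IsPOVM M → (∀ i, IsSep (M i)) → succProb η ρ M ≤ η x) ∧
    IsLUB ((fun M => succProb η ρ M) ''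
      {M | IsPOVM M ∧ ∀ i, IsSep (M i)}) (η x) := by
  have part1 : ∀ M : Fin n → Matrix ((k : Fin m) → ι k) ((k : Fin m) → ι k) ℂ,
      IsPOVM M → (∀ i, IsSep (M i)) → succProb η ρ M ≤ η x := by
    intro M hpovm hsep
    have key : ∀ i, 0 ≤ ((((η x : ℂ) • ρ x - (η i : ℂ) • ρ i) * M i).trace).re :=
      fun i => blockpos_sep_nonneg (hbp i) (hsep i)
    have hsumM : ∑ i, ((ρ x * M i).trace).re = 1 := by
      have h1 : ∑ i, (ρ x * M i).trace = (ρ x).trace := by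
        rw [← Matrix.trace_sum, ← Finset.mul_sum, hpovm.2, mul_one]
      calc ∑ i, ((ρ x * M i).trace).re = (∑ i, (ρ x * M i).trace).re :=
            (Complex.re_sum _ _).symm
        _ = 1 := by rw [h1, (hρ x).2]; simp
    have expand : ∀ i, ((((η x:ℂ) • ρ x - (η i:ℂ) • ρ i) * M i).trace).re
        = η x * ((ρ x * M i).trace).re - η i * ((ρ i * M i).trace).re := by
      intro i
      rw [Matrix.sub_mul, Matrix.smul_mul, Matrix.smul_mul, Matrix.trace_sub,
        Matrix.trace_smul, Matrix.trace_smul]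
      simp [Complex.sub_re]
    have h0 : 0 ≤ ∑ i, (η x * ((ρ x * M i).trace).re - η i * ((ρ i * M i).trace).re) :=
      Finset.sum_nonneg fun i _ => (expand i) ▸ key i
    rw [Finset.sum_sub_distrib, ← Finset.mul_sum, hsumM, mul_one] at h0
    unfold succProb
    linarith
  refine ⟨part1, ?_, ?_⟩
  · rintro y ⟨M, ⟨hpovm, hsep⟩, rfl⟩
    exact part1 M hpovm hsep
  · intro b hb
    refine hb ⟨fun i => if i = x then 1 else 0, ⟨⟨?_, ?_⟩, ?_⟩, ?_⟩
    · intro i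
      dsimp only
      split
      · exact Matrix.PosSemidef.one
      · exact Matrix.PosSemidef.zero
    · simp
    · intro i
      by_cases h : i = x
      · subst h
        simp only [if_pos rfl]
        exact ⟨{0}, fun _ _ => 1, fun _ _ _ => Matrix.PosSemidef.one, by
          simp [Finset.sum_singleton, tensorFam_one]⟩
      · simp only [if_neg h]
        exact ⟨∅, fun _ _ => 0, by simp, by simp⟩
    · unfold succProb
      dsimp only
      rw [Finset.sum_eq_single x]
      · simp [(hρ x).2]
      · intro i _ hne
        simp [hne]
      · intro h
        exact absurd (Finset.mem_univ x) h

end
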